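/- Under the homogeneous DPP difference system with the stated regularity, boundary-condition encodings (H1)–(H2), and energy E(t), the second derivative of the energy satisfies, for every t ∈ [0,T]: E″(t) = 2 ∫_Ω (γ/φ₁(x)) |∂w₁/∂t(x,t)|² dx + 2 ∫_Ω (γ/φ₂(x)) |∂w₂/∂t(x,t)|² dx. -/

import Mathlib

open Set MeasureTheory Matrix

section Helpers

lemma hasDerivWithinAt_dot {u v : ℝ → Fin 3 → ℝ} {du dv : Fin 3 → ℝ} {s : Set ℝ} {t : ℝ}
    (hu : HasDerivWithinAt u du s t) (hv : HasDerivWithinAt v dv s t) :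
    HasDerivWithinAt (fun r => u r ⬝ᵥ v r) (du ⬝ᵥ v t + u t ⬝ᵥ dv) s t := by
  have h : ∀ j : Fin 3, HasDerivWithinAt (fun r => u r j * v r j)
      (du j * v t j + u t j * dv j) s t := by
    intro j
    have hu' : HasDerivWithinAt (fun r => u r j) (du j) s t :=
      (ContinuousLinearMap.proj j : (Fin 3 → ℝ) →L[ℝ] ℝ).hasFDerivAt.comp_hasDerivWithinAt t hu
    have hv' : HasDerivWithinAt (fun r => v r j) (dv j) s t :=
      (ContinuousLinearMap.proj j : (Fin 3 → ℝ) →L[ℝ] ℝ).hasFDerivAt.comp_hasDerivWithinAt t hv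
    exact hu'.mul hv'
  have hs := HasDerivWithinAt.fun_sum (fun j (_ : j ∈ Finset.univ) => h j)
  simpa [dotProduct, Finset.sum_add_distrib] using hs

lemma hasDerivWithinAt_mulVec (M : Matrix (Fin 3) (Fin 3) ℝ) {v : ℝ → Fin 3 → ℝ} {dv : Fin 3 → ℝ}
    {s : Set ℝ} {t : ℝ} (hv : HasDerivWithinAt v dv s t) :
    HasDerivWithinAt (fun r => M *ᵥ v r) (M *ᵥ dv) s t :=
  (M.mulVecLin.toContinuousLinearMap.hasFDerivAt.comp_hasDerivWithinAt t hv)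

lemma symm_dot {M : Matrix (Fin 3) (Fin 3) ℝ} (hM : Mᵀ = M) (u v : Fin 3 → ℝ) :
    u ⬝ᵥ (M *ᵥ v) = v ⬝ᵥ (M *ᵥ u) := by
  rw [Matrix.dotProduct_mulVec, ← Matrix.mulVec_transpose, hM, dotProduct_comm]

lemma abs_dot_le' {u v : Fin 3 → ℝ} {Cu Cv : ℝ} (hu : ‖u‖ ≤ Cu) (hv : ‖v‖ ≤ Cv) :
    |u ⬝ᵥ v| ≤ 3 * (Cu * Cv) := by
  have hCu : 0 ≤ Cu := (norm_nonneg _).trans hu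
  have hui : ∀ j, |u j| ≤ Cu := fun j => by
    have := norm_le_pi_norm u j; rw [Real.norm_eq_abs] at this; exact this.trans hu
  have hvj : ∀ j, |v j| ≤ Cv := fun j => by
    have := norm_le_pi_norm v j; rw [Real.norm_eq_abs] at this; exact this.trans hv
  calc |u ⬝ᵥ v| ≤ ∑ j : Fin 3, |u j * v j| := Finset.abs_sum_le_sum_abs _ _
    _ ≤ ∑ _j : Fin 3, Cu * Cv := Finset.sum_le_sum fun j _ => by
        rw [abs_mul]; exact mul_le_mul (hui j) (hvj j) (abs_nonneg _) hCu
    _ = 3 * (Cu * Cv) := by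
        rw [Finset.sum_const, Finset.card_univ, Fintype.card_fin]; ring

lemma abs_dotMat_le {M : Matrix (Fin 3) (Fin 3) ℝ} {u v : Fin 3 → ℝ} {CM Cu Cv : ℝ}
    (hM : ∀ i j, |M i j| ≤ CM) (hu : ‖u‖ ≤ Cu) (hv : ‖v‖ ≤ Cv) :
    |u ⬝ᵥ (M *ᵥ v)| ≤ 9 * (CM * (Cu * Cv)) := by
  have hCM : 0 ≤ CM := (abs_nonneg _).trans (hM 0 0)
  have hCu : 0 ≤ Cu := (norm_nonneg _).trans hu
  have hui : ∀ j, |u j| ≤ Cu := fun j => by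
    have := norm_le_pi_norm u j; rw [Real.norm_eq_abs] at this; exact this.trans hu
  have hvj : ∀ j, |v j| ≤ Cv := fun j => by
    have := norm_le_pi_norm v j; rw [Real.norm_eq_abs] at this; exact this.trans hv
  have h1 : u ⬝ᵥ (M *ᵥ v) = ∑ i : Fin 3, ∑ j : Fin 3, u i * (M i j * v j) := by
    simp [dotProduct, Matrix.mulVec, Finset.mul_sum]
  rw [h1]
  calc |∑ i : Fin 3, ∑ j : Fin 3, u i * (M i j * v j)|
      ≤ ∑ i : Fin 3, |∑ j : Fin 3, u i * (M i j * v j)| := Finset.abs_sum_le_sum_abs _ _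
    _ ≤ ∑ _i : Fin 3, ∑ _j : Fin 3, Cu * (CM * Cv) := Finset.sum_le_sum fun i _ =>
        (Finset.abs_sum_le_sum_abs _ _).trans (Finset.sum_le_sum fun j _ => by
          rw [abs_mul, abs_mul]
          exact mul_le_mul (hui i) (mul_le_mul (hM i j) (hvj j) (abs_nonneg _) hCM)
            (by positivity) hCu)
    _ = 9 * (CM * (Cu * Cv)) := by
        rw [Finset.sum_const, Finset.sum_const, Finset.card_univ, Fintype.card_fin]
        ring

lemma integrableOn_of_bdd {Ω : Set (Fin 3 → ℝ)} (hO : IsOpen Ω) (hb : Bornology.IsBounded Ω)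
    {f : (Fin 3 → ℝ) → ℝ} (hc : ContinuousOn f Ω) {C : ℝ} (hC : ∀ x ∈ Ω, |f x| ≤ C) :
    IntegrableOn f Ω := by
  have hmeas := hO.measurableSet
  have hμ : volume Ω < ⊤ := hb.measure_lt_top
  refine Integrable.mono' (g := fun _ => C) ?_ (hc.aestronglyMeasurable hmeas) ?_
  · exact integrableOn_const hμ.ne
  · filter_upwards [ae_restrict_mem hmeas] with x hx
    simpa [Real.norm_eq_abs] using hC x hx

lemma contOn_dot {α : Type*} [TopologicalSpace α] {s : Set α} {f g : α → Fin 3 → ℝ}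
    (hf : ContinuousOn f s) (hg : ContinuousOn g s) :
    ContinuousOn (fun p => f p ⬝ᵥ g p) s := by
  have : (fun p => f p ⬝ᵥ g p) = fun p => ∑ j : Fin 3, f p j * g p j := by
    funext p; rfl
  rw [this]
  exact continuousOn_finset_sum _ fun j _ =>
    ((continuous_apply j).comp_continuousOn hf).mul ((continuous_apply j).comp_continuousOn hg)

lemma contOn_dotMat {α : Type*} [TopologicalSpace α] {s : Set α} {f g : α → Fin 3 → ℝ}
    {M : α → Matrix (Fin 3) (Fin 3) ℝ}
    (hf : ContinuousOn f s) (hM : ∀ i j, ContinuousOn (fun p => M p i j) s)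
    (hg : ContinuousOn g s) :
    ContinuousOn (fun p => f p ⬝ᵥ (M p *ᵥ g p)) s := by
  have : (fun p => f p ⬝ᵥ (M p *ᵥ g p))
      = fun p => ∑ i : Fin 3, ∑ j : Fin 3, f p i * (M p i j * g p j) := by
    funext p; simp [dotProduct, Matrix.mulVec, Finset.mul_sum]
  rw [this]
  exact continuousOn_finset_sum _ fun i _ => continuousOn_finset_sum _ fun j _ =>
    ((continuous_apply i).comp_continuousOn hf).mul
      ((hM i j).mul ((continuous_apply j).comp_continuousOn hg))

lemma contOn_fix {Ω : Set (Fin 3 → ℝ)} {I : Set ℝ} {f : (Fin 3 → ℝ) → ℝ → ℝ}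
    (hc : ContinuousOn (fun p : (Fin 3 → ℝ) × ℝ => f p.1 p.2) (Ω ×ˢ I)) {s : ℝ} (hs : s ∈ I) :
    ContinuousOn (fun x => f x s) Ω :=
  hc.comp ((continuous_id.prodMk continuous_const).continuousOn)
    (fun x hx => Set.mk_mem_prod hx hs)

lemma abs_mul_le' {a b A B : ℝ} (hA : |a| ≤ A) (hB : |b| ≤ B) : |a * b| ≤ A * B := by
  rw [abs_mul]
  exact mul_le_mul hA hB (abs_nonneg _) ((abs_nonneg _).trans hA)

lemma abs_add_le' {a b A B : ℝ} (hA : |a| ≤ A) (hB : |b| ≤ B) : |a + b| ≤ A + B :=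
  (abs_add_le _ _).trans (add_le_add hA hB)

lemma abs_sub_le'' {a b A B : ℝ} (hA : |a| ≤ A) (hB : |b| ≤ B) : |a - b| ≤ A + B := by
  rw [sub_eq_add_neg]; exact (abs_add_le _ _).trans (add_le_add hA (by rwa [abs_neg]))

lemma abs_gamma_div {γ c k φx : ℝ} (hγ : 0 < γ) (hk : 0 < k) (hc : 0 < c) (h : c ≤ φx) :
    |γ / (k * φx)| ≤ γ / (k * c) := by
  have hφ : 0 < φx := lt_of_lt_of_le hc h
  rw [abs_of_nonneg (by positivity)]
  gcongr

lemma abs_gamma_div' {γ c φx : ℝ} (hγ : 0 < γ) (hc : 0 < c) (h : c ≤ φx) :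
    |γ / φx| ≤ γ / c := by
  have hφ : 0 < φx := lt_of_lt_of_le hc h
  rw [abs_of_nonneg (by positivity)]
  gcongr

end Helpers


/-- Divergence associated with a (spatial) Jacobian, i.e. the trace of the Fréchet
derivative of a vector field on ℝ³. -/
noncomputable def divOf (J : (Fin 3 → ℝ) →L[ℝ] (Fin 3 → ℝ)) : ℝ :=
  ∑ j : Fin 3, J (Pi.single j 1) j

/-- The continuous linear map `v ↦ g · v` associated with a gradient vector `g`;
`HasFDerivAt q (gradCLM g) x` says `g` is the spatial gradient of `q` at `x`. -/
noncomputable def gradCLM (g : Fin 3 → ℝ) : (Fin 3 → ℝ) →L[ℝ] ℝ :=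
  ∑ j : Fin 3, g j • (ContinuousLinearMap.proj j : (Fin 3 → ℝ) →L[ℝ] ℝ)

/-- The homogeneous double porosity/permeability (DPP) difference system on a bounded open
domain `Ω ⊆ ℝ³` and time interval `[0,T]`, together with all the regularity assumptions and
the boundary-condition encodings (H1)–(H2) described in the paper.

Fields `w₁, w₂` (velocity differences) and `q₁, q₂` (pressure differences) satisfy
`(γ/φᵢ) ∂wᵢ/∂t + μ Kᵢ⁻¹ wᵢ + ∇qᵢ = 0`, `div w₁ = −(β/μ)(q₁−q₂)`, `div w₂ = +(β/μ)(q₁−q₂)`.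
The time derivatives `dwᵢ, dqᵢ`, the spatial gradients `gqᵢ`, and the spatial Jacobians
`Jwᵢ, Jdwᵢ` (whose traces are the divergences of `wᵢ` and of `∂wᵢ/∂t`) are carried as data,
tied to the fields by `HasDerivWithinAt`/`HasFDerivAt` hypotheses. The hypothesis `leibniz`
expresses that differentiation in `t` under the integral over `Ω` is valid (for continuous
bounded integrands with continuous bounded time derivatives). -/
structure DPP where
  Ω : Set (Fin 3 → ℝ)
  hΩopen : IsOpen Ω
  hΩbdd : Bornology.IsBounded Ω
  T : ℝ
  hT : 0 < T
  γ : ℝ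
  μ : ℝ
  β : ℝ
  hγ : 0 < γ
  hμ : 0 < μ
  hβ : 0 < β
  φ₁ : (Fin 3 → ℝ) → ℝ
  φ₂ : (Fin 3 → ℝ) → ℝ
  hφ₁pos : ∀ x ∈ Ω, 0 < φ₁ x
  hφ₂pos : ∀ x ∈ Ω, 0 < φ₂ x
  hφ₁cont : ContinuousOn φ₁ Ω
  hφ₂cont : ContinuousOn φ₂ Ω
  hφ₁bdd : ∃ c > (0:ℝ), ∃ C : ℝ, ∀ x ∈ Ω, c ≤ φ₁ x ∧ φ₁ x ≤ C
  hφ₂bdd : ∃ c > (0:ℝ), ∃ C : ℝ, ∀ x ∈ Ω, c ≤ φ₂ x ∧ φ₂ x ≤ C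
  K₁ : (Fin 3 → ℝ) → Matrix (Fin 3) (Fin 3) ℝ
  K₂ : (Fin 3 → ℝ) → Matrix (Fin 3) (Fin 3) ℝ
  hK₁symm : ∀ x ∈ Ω, (K₁ x).IsSymm
  hK₂symm : ∀ x ∈ Ω, (K₂ x).IsSymm
  hK₁pd : ∀ x ∈ Ω, (K₁ x).PosDef
  hK₂pd : ∀ x ∈ Ω, (K₂ x).PosDef
  hK₁invcont : ∀ i j, ContinuousOn (fun x => (K₁ x)⁻¹ i j) Ω
  hK₂invcont : ∀ i j, ContinuousOn (fun x => (K₂ x)⁻¹ i j) Ω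
  hK₁invbdd : ∃ C : ℝ, ∀ x ∈ Ω, ∀ i j, |(K₁ x)⁻¹ i j| ≤ C
  hK₂invbdd : ∃ C : ℝ, ∀ x ∈ Ω, ∀ i j, |(K₂ x)⁻¹ i j| ≤ C
  -- the fields of the difference system
  w₁ : (Fin 3 → ℝ) → ℝ → (Fin 3 → ℝ)
  w₂ : (Fin 3 → ℝ) → ℝ → (Fin 3 → ℝ)
  q₁ : (Fin 3 → ℝ) → ℝ → ℝ
  q₂ : (Fin 3 → ℝ) → ℝ → ℝ
  -- derivative data: time derivatives, spatial gradients, spatial Jacobians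
  dw₁ : (Fin 3 → ℝ) → ℝ → (Fin 3 → ℝ)
  dw₂ : (Fin 3 → ℝ) → ℝ → (Fin 3 → ℝ)
  dq₁ : (Fin 3 → ℝ) → ℝ → ℝ
  dq₂ : (Fin 3 → ℝ) → ℝ → ℝ
  gq₁ : (Fin 3 → ℝ) → ℝ → (Fin 3 → ℝ)
  gq₂ : (Fin 3 → ℝ) → ℝ → (Fin 3 → ℝ)
  Jw₁ : (Fin 3 → ℝ) → ℝ → ((Fin 3 → ℝ) →L[ℝ] (Fin 3 → ℝ))
  Jw₂ : (Fin 3 → ℝ) → ℝ → ((Fin 3 → ℝ) →L[ℝ] (Fin 3 → ℝ))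
  Jdw₁ : (Fin 3 → ℝ) → ℝ → ((Fin 3 → ℝ) →L[ℝ] (Fin 3 → ℝ))
  Jdw₂ : (Fin 3 → ℝ) → ℝ → ((Fin 3 → ℝ) →L[ℝ] (Fin 3 → ℝ))
  -- C¹ regularity in time: the data are the actual derivatives
  hdw₁ : ∀ x ∈ Ω, ∀ t ∈ Icc (0:ℝ) T, HasDerivWithinAt (w₁ x) (dw₁ x t) (Icc (0:ℝ) T) t
  hdw₂ : ∀ x ∈ Ω, ∀ t ∈ Icc (0:ℝ) T, HasDerivWithinAt (w₂ x) (dw₂ x t) (Icc (0:ℝ) T) t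
  hdq₁ : ∀ x ∈ Ω, ∀ t ∈ Icc (0:ℝ) T, HasDerivWithinAt (q₁ x) (dq₁ x t) (Icc (0:ℝ) T) t
  hdq₂ : ∀ x ∈ Ω, ∀ t ∈ Icc (0:ℝ) T, HasDerivWithinAt (q₂ x) (dq₂ x t) (Icc (0:ℝ) T) t
  -- C¹ regularity in space: gradients and Jacobians
  hgq₁ : ∀ t ∈ Icc (0:ℝ) T, ∀ x ∈ Ω, HasFDerivAt (fun y => q₁ y t) (gradCLM (gq₁ x t)) x
  hgq₂ : ∀ t ∈ Icc (0:ℝ) T, ∀ x ∈ Ω, HasFDerivAt (fun y => q₂ y t) (gradCLM (gq₂ x t)) x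
  hJw₁ : ∀ t ∈ Icc (0:ℝ) T, ∀ x ∈ Ω, HasFDerivAt (fun y => w₁ y t) (Jw₁ x t) x
  hJw₂ : ∀ t ∈ Icc (0:ℝ) T, ∀ x ∈ Ω, HasFDerivAt (fun y => w₂ y t) (Jw₂ x t) x
  hJdw₁ : ∀ t ∈ Icc (0:ℝ) T, ∀ x ∈ Ω, HasFDerivAt (fun y => dw₁ y t) (Jdw₁ x t) x
  hJdw₂ : ∀ t ∈ Icc (0:ℝ) T, ∀ x ∈ Ω, HasFDerivAt (fun y => dw₂ y t) (Jdw₂ x t) x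
  -- `div (∂wᵢ/∂t) = ∂(div wᵢ)/∂t`
  hdivcomm₁ : ∀ x ∈ Ω, ∀ t ∈ Icc (0:ℝ) T,
    HasDerivWithinAt (fun s => divOf (Jw₁ x s)) (divOf (Jdw₁ x t)) (Icc (0:ℝ) T) t
  hdivcomm₂ : ∀ x ∈ Ω, ∀ t ∈ Icc (0:ℝ) T,
    HasDerivWithinAt (fun s => divOf (Jw₂ x s)) (divOf (Jdw₂ x t)) (Icc (0:ℝ) T) t
  -- joint continuity of the fields and of their appearing first derivatives
  hw₁cont : ContinuousOn (fun p : (Fin 3 → ℝ) × ℝ => w₁ p.1 p.2) (Ω ×ˢ Icc (0:ℝ) T)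
  hw₂cont : ContinuousOn (fun p : (Fin 3 → ℝ) × ℝ => w₂ p.1 p.2) (Ω ×ˢ Icc (0:ℝ) T)
  hq₁cont : ContinuousOn (fun p : (Fin 3 → ℝ) × ℝ => q₁ p.1 p.2) (Ω ×ˢ Icc (0:ℝ) T)
  hq₂cont : ContinuousOn (fun p : (Fin 3 → ℝ) × ℝ => q₂ p.1 p.2) (Ω ×ˢ Icc (0:ℝ) T)
  hdw₁cont : ContinuousOn (fun p : (Fin 3 → ℝ) × ℝ => dw₁ p.1 p.2) (Ω ×ˢ Icc (0:ℝ) T)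
  hdw₂cont : ContinuousOn (fun p : (Fin 3 → ℝ) × ℝ => dw₂ p.1 p.2) (Ω ×ˢ Icc (0:ℝ) T)
  hdq₁cont : ContinuousOn (fun p : (Fin 3 → ℝ) × ℝ => dq₁ p.1 p.2) (Ω ×ˢ Icc (0:ℝ) T)
  hdq₂cont : ContinuousOn (fun p : (Fin 3 → ℝ) × ℝ => dq₂ p.1 p.2) (Ω ×ˢ Icc (0:ℝ) T)
  hgq₁cont : ContinuousOn (fun p : (Fin 3 → ℝ) × ℝ => gq₁ p.1 p.2) (Ω ×ˢ Icc (0:ℝ) T)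
  hgq₂cont : ContinuousOn (fun p : (Fin 3 → ℝ) × ℝ => gq₂ p.1 p.2) (Ω ×ˢ Icc (0:ℝ) T)
  hdivw₁cont : ContinuousOn (fun p : (Fin 3 → ℝ) × ℝ => divOf (Jw₁ p.1 p.2)) (Ω ×ˢ Icc (0:ℝ) T)
  hdivw₂cont : ContinuousOn (fun p : (Fin 3 → ℝ) × ℝ => divOf (Jw₂ p.1 p.2)) (Ω ×ˢ Icc (0:ℝ) T)
  hdivdw₁cont : ContinuousOn (fun p : (Fin 3 → ℝ) × ℝ => divOf (Jdw₁ p.1 p.2)) (Ω ×ˢ Icc (0:ℝ) T)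
  hdivdw₂cont : ContinuousOn (fun p : (Fin 3 → ℝ) × ℝ => divOf (Jdw₂ p.1 p.2)) (Ω ×ˢ Icc (0:ℝ) T)
  -- boundedness of the fields and of their appearing first derivatives
  hw₁bdd : ∃ C : ℝ, ∀ x ∈ Ω, ∀ t ∈ Icc (0:ℝ) T, ‖w₁ x t‖ ≤ C
  hw₂bdd : ∃ C : ℝ, ∀ x ∈ Ω, ∀ t ∈ Icc (0:ℝ) T, ‖w₂ x t‖ ≤ C
  hq₁bdd : ∃ C : ℝ, ∀ x ∈ Ω, ∀ t ∈ Icc (0:ℝ) T, |q₁ x t| ≤ C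
  hq₂bdd : ∃ C : ℝ, ∀ x ∈ Ω, ∀ t ∈ Icc (0:ℝ) T, |q₂ x t| ≤ C
  hdw₁bdd : ∃ C : ℝ, ∀ x ∈ Ω, ∀ t ∈ Icc (0:ℝ) T, ‖dw₁ x t‖ ≤ C
  hdw₂bdd : ∃ C : ℝ, ∀ x ∈ Ω, ∀ t ∈ Icc (0:ℝ) T, ‖dw₂ x t‖ ≤ C
  hdq₁bdd : ∃ C : ℝ, ∀ x ∈ Ω, ∀ t ∈ Icc (0:ℝ) T, |dq₁ x t| ≤ C
  hdq₂bdd : ∃ C : ℝ, ∀ x ∈ Ω, ∀ t ∈ Icc (0:ℝ) T, |dq₂ x t| ≤ C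
  hgq₁bdd : ∃ C : ℝ, ∀ x ∈ Ω, ∀ t ∈ Icc (0:ℝ) T, ‖gq₁ x t‖ ≤ C
  hgq₂bdd : ∃ C : ℝ, ∀ x ∈ Ω, ∀ t ∈ Icc (0:ℝ) T, ‖gq₂ x t‖ ≤ C
  hdivw₁bdd : ∃ C : ℝ, ∀ x ∈ Ω, ∀ t ∈ Icc (0:ℝ) T, |divOf (Jw₁ x t)| ≤ C
  hdivw₂bdd : ∃ C : ℝ, ∀ x ∈ Ω, ∀ t ∈ Icc (0:ℝ) T, |divOf (Jw₂ x t)| ≤ C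
  hdivdw₁bdd : ∃ C : ℝ, ∀ x ∈ Ω, ∀ t ∈ Icc (0:ℝ) T, |divOf (Jdw₁ x t)| ≤ C
  hdivdw₂bdd : ∃ C : ℝ, ∀ x ∈ Ω, ∀ t ∈ Icc (0:ℝ) T, |divOf (Jdw₂ x t)| ≤ C
  -- the homogeneous DPP difference system
  pde₁ : ∀ x ∈ Ω, ∀ t ∈ Icc (0:ℝ) T,
    (γ / φ₁ x) • dw₁ x t + μ • ((K₁ x)⁻¹ *ᵥ w₁ x t) + gq₁ x t = 0
  pde₂ : ∀ x ∈ Ω, ∀ t ∈ Icc (0:ℝ) T,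
    (γ / φ₂ x) • dw₂ x t + μ • ((K₂ x)⁻¹ *ᵥ w₂ x t) + gq₂ x t = 0
  mass₁ : ∀ x ∈ Ω, ∀ t ∈ Icc (0:ℝ) T, divOf (Jw₁ x t) = -(β / μ) * (q₁ x t - q₂ x t)
  mass₂ : ∀ x ∈ Ω, ∀ t ∈ Icc (0:ℝ) T, divOf (Jw₂ x t) = (β / μ) * (q₁ x t - q₂ x t)
  -- boundary-condition encodings (H1)–(H2)
  H1₁ : ∀ t ∈ Icc (0:ℝ) T,
    (∫ x in Ω, (w₁ x t ⬝ᵥ gq₁ x t + q₁ x t * divOf (Jw₁ x t))) = 0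
  H1₂ : ∀ t ∈ Icc (0:ℝ) T,
    (∫ x in Ω, (w₂ x t ⬝ᵥ gq₂ x t + q₂ x t * divOf (Jw₂ x t))) = 0
  H2₁ : ∀ t ∈ Icc (0:ℝ) T,
    (∫ x in Ω, (dw₁ x t ⬝ᵥ gq₁ x t + q₁ x t * divOf (Jdw₁ x t))) = 0
  H2₂ : ∀ t ∈ Icc (0:ℝ) T,
    (∫ x in Ω, (dw₂ x t ⬝ᵥ gq₂ x t + q₂ x t * divOf (Jdw₂ x t))) = 0
  -- differentiation in `t` under the integral over `Ω` is valid
  leibniz : ∀ F F' : (Fin 3 → ℝ) → ℝ → ℝ,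
    (∀ x ∈ Ω, ∀ t ∈ Icc (0:ℝ) T, HasDerivWithinAt (F x) (F' x t) (Icc (0:ℝ) T) t) →
    ContinuousOn (fun p : (Fin 3 → ℝ) × ℝ => F p.1 p.2) (Ω ×ˢ Icc (0:ℝ) T) →
    ContinuousOn (fun p : (Fin 3 → ℝ) × ℝ => F' p.1 p.2) (Ω ×ˢ Icc (0:ℝ) T) →
    (∃ C : ℝ, ∀ x ∈ Ω, ∀ t ∈ Icc (0:ℝ) T, |F x t| ≤ C) →
    (∃ C : ℝ, ∀ x ∈ Ω, ∀ t ∈ Icc (0:ℝ) T, |F' x t| ≤ C) →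
    ∀ t ∈ Icc (0:ℝ) T,
      HasDerivWithinAt (fun s => ∫ x in Ω, F x s) (∫ x in Ω, F' x t) (Icc (0:ℝ) T) t

/-- The (kinetic) energy `E(t) = ∫_Ω [ γ/(2φ₁) |w₁|² + γ/(2φ₂) |w₂|² ] dx` of the
difference system. -/
noncomputable def DPP.E (S : DPP) : ℝ → ℝ := fun t =>
  ∫ x in S.Ω, ((S.γ / (2 * S.φ₁ x)) * (S.w₁ x t ⬝ᵥ S.w₁ x t)
    + (S.γ / (2 * S.φ₂ x)) * (S.w₂ x t ⬝ᵥ S.w₂ x t))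

noncomputable def DPPF0 (S : DPP) (x : Fin 3 → ℝ) (t : ℝ) : ℝ :=
  S.γ / (2 * S.φ₁ x) * (S.w₁ x t ⬝ᵥ S.w₁ x t) + S.γ / (2 * S.φ₂ x) * (S.w₂ x t ⬝ᵥ S.w₂ x t)

noncomputable def DPPF1 (S : DPP) (x : Fin 3 → ℝ) (t : ℝ) : ℝ :=
  S.γ / (2 * S.φ₁ x) * (S.dw₁ x t ⬝ᵥ S.w₁ x t + S.w₁ x t ⬝ᵥ S.dw₁ x t)
  + S.γ / (2 * S.φ₂ x) * (S.dw₂ x t ⬝ᵥ S.w₂ x t + S.w₂ x t ⬝ᵥ S.dw₂ x t)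

noncomputable def DPPG0 (S : DPP) (x : Fin 3 → ℝ) (t : ℝ) : ℝ :=
  -S.μ * (S.w₁ x t ⬝ᵥ ((S.K₁ x)⁻¹ *ᵥ S.w₁ x t))
  + -S.μ * (S.w₂ x t ⬝ᵥ ((S.K₂ x)⁻¹ *ᵥ S.w₂ x t))
  + -(S.β / S.μ) * ((S.q₁ x t - S.q₂ x t) * (S.q₁ x t - S.q₂ x t))

noncomputable def DPPG1 (S : DPP) (x : Fin 3 → ℝ) (t : ℝ) : ℝ :=
  -S.μ * (S.dw₁ x t ⬝ᵥ ((S.K₁ x)⁻¹ *ᵥ S.w₁ x t) + S.w₁ x t ⬝ᵥ ((S.K₁ x)⁻¹ *ᵥ S.dw₁ x t))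
  + -S.μ * (S.dw₂ x t ⬝ᵥ ((S.K₂ x)⁻¹ *ᵥ S.w₂ x t) + S.w₂ x t ⬝ᵥ ((S.K₂ x)⁻¹ *ᵥ S.dw₂ x t))
  + -(S.β / S.μ) * ((S.dq₁ x t - S.dq₂ x t) * (S.q₁ x t - S.q₂ x t)
      + (S.q₁ x t - S.q₂ x t) * (S.dq₁ x t - S.dq₂ x t))

lemma DPPF_deriv (S : DPP) {x : Fin 3 → ℝ} {t : ℝ} (hx : x ∈ S.Ω) (ht : t ∈ Icc (0:ℝ) S.T) :
    HasDerivWithinAt (fun s => DPPF0 S x s) (DPPF1 S x t) (Icc (0:ℝ) S.T) t := by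
  have h1 := hasDerivWithinAt_dot (S.hdw₁ x hx t ht) (S.hdw₁ x hx t ht)
  have h2 := hasDerivWithinAt_dot (S.hdw₂ x hx t ht) (S.hdw₂ x hx t ht)
  exact (h1.const_mul _).add (h2.const_mul _)

lemma DPPG_deriv (S : DPP) {x : Fin 3 → ℝ} {t : ℝ} (hx : x ∈ S.Ω) (ht : t ∈ Icc (0:ℝ) S.T) :
    HasDerivWithinAt (fun s => DPPG0 S x s) (DPPG1 S x t) (Icc (0:ℝ) S.T) t := by
  have m1 := hasDerivWithinAt_mulVec ((S.K₁ x)⁻¹) (S.hdw₁ x hx t ht)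
  have h1 := hasDerivWithinAt_dot (S.hdw₁ x hx t ht) m1
  have m2 := hasDerivWithinAt_mulVec ((S.K₂ x)⁻¹) (S.hdw₂ x hx t ht)
  have h2 := hasDerivWithinAt_dot (S.hdw₂ x hx t ht) m2
  have hq := (S.hdq₁ x hx t ht).sub (S.hdq₂ x hx t ht)
  have h3 := hq.mul hq
  exact ((h1.const_mul _).add (h2.const_mul _)).add (h3.const_mul _)

/-- **Second identity of Proposition 3.2**: for the homogeneous DPP difference system,
for every `t ∈ [0,T]`,
`E″(t) = 2 ∫_Ω (γ/φ₁) |∂w₁/∂t|² dx + 2 ∫_Ω (γ/φ₂) |∂w₂/∂t|² dx`. -/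
theorem stmt_3 (S : DPP) :
    ∀ t ∈ Icc (0:ℝ) S.T,
      derivWithin (fun s => derivWithin S.E (Icc (0:ℝ) S.T) s) (Icc (0:ℝ) S.T) t =
        2 * (∫ x in S.Ω, (S.γ / S.φ₁ x) * (S.dw₁ x t ⬝ᵥ S.dw₁ x t))
          + 2 * (∫ x in S.Ω, (S.γ / S.φ₂ x) * (S.dw₂ x t ⬝ᵥ S.dw₂ x t)) := by
  intro t ht
  have hUD : UniqueDiffOn ℝ (Icc (0:ℝ) S.T) := uniqueDiffOn_Icc S.hT
  have hmeas := S.hΩopen.measurableSet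
  -- bound constants
  obtain ⟨c1, hc1, C1, hφ1b⟩ := S.hφ₁bdd
  obtain ⟨c2, hc2, C2, hφ2b⟩ := S.hφ₂bdd
  obtain ⟨Cw1, hCw1⟩ := S.hw₁bdd
  obtain ⟨Cw2, hCw2⟩ := S.hw₂bdd
  obtain ⟨Cq1, hCq1⟩ := S.hq₁bdd
  obtain ⟨Cq2, hCq2⟩ := S.hq₂bdd
  obtain ⟨Cd1, hCd1⟩ := S.hdw₁bdd
  obtain ⟨Cd2, hCd2⟩ := S.hdw₂bdd
  obtain ⟨Ce1, hCe1⟩ := S.hdq₁bdd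
  obtain ⟨Ce2, hCe2⟩ := S.hdq₂bdd
  obtain ⟨Cg1, hCg1⟩ := S.hgq₁bdd
  obtain ⟨Cg2, hCg2⟩ := S.hgq₂bdd
  obtain ⟨Cv1, hCv1⟩ := S.hdivw₁bdd
  obtain ⟨Cv2, hCv2⟩ := S.hdivw₂bdd
  obtain ⟨Cu1, hCu1⟩ := S.hdivdw₁bdd
  obtain ⟨Cu2, hCu2⟩ := S.hdivdw₂bdd
  obtain ⟨CK1, hCK1⟩ := S.hK₁invbdd
  obtain ⟨CK2, hCK2⟩ := S.hK₂invbdd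
  -- pointwise bounds for coefficient fields
  have bφ1 : ∀ x ∈ S.Ω, |S.γ / (2 * S.φ₁ x)| ≤ S.γ / (2 * c1) :=
    fun x hx => abs_gamma_div S.hγ two_pos hc1 (hφ1b x hx).1
  have bφ2 : ∀ x ∈ S.Ω, |S.γ / (2 * S.φ₂ x)| ≤ S.γ / (2 * c2) :=
    fun x hx => abs_gamma_div S.hγ two_pos hc2 (hφ2b x hx).1
  have bγφ1 : ∀ x ∈ S.Ω, |S.γ / S.φ₁ x| ≤ S.γ / c1 :=
    fun x hx => abs_gamma_div' S.hγ hc1 (hφ1b x hx).1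
  have bγφ2 : ∀ x ∈ S.Ω, |S.γ / S.φ₂ x| ≤ S.γ / c2 :=
    fun x hx => abs_gamma_div' S.hγ hc2 (hφ2b x hx).1
  have bμ : |-S.μ| ≤ S.μ := by rw [abs_neg, abs_of_pos S.hμ]
  have bβμ : |-(S.β / S.μ)| ≤ S.β / S.μ := by
    rw [abs_neg, abs_of_pos (div_pos S.hβ S.hμ)]
  -- continuity atoms
  have hfst : ContinuousOn (Prod.fst : (Fin 3 → ℝ) × ℝ → (Fin 3 → ℝ))
      (S.Ω ×ˢ Icc (0:ℝ) S.T) := continuous_fst.continuousOn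
  have hmapΩ : Set.MapsTo (Prod.fst : (Fin 3 → ℝ) × ℝ → (Fin 3 → ℝ))
      (S.Ω ×ˢ Icc (0:ℝ) S.T) S.Ω := fun p hp => hp.1
  have cφ1 : ContinuousOn (fun p : (Fin 3 → ℝ) × ℝ => S.γ / (2 * S.φ₁ p.1))
      (S.Ω ×ˢ Icc (0:ℝ) S.T) :=
    continuousOn_const.div (continuousOn_const.mul (S.hφ₁cont.comp hfst hmapΩ))
      (fun p hp => by have := S.hφ₁pos p.1 hp.1; positivity)
  have cφ2 : ContinuousOn (fun p : (Fin 3 → ℝ) × ℝ => S.γ / (2 * S.φ₂ p.1))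
      (S.Ω ×ˢ Icc (0:ℝ) S.T) :=
    continuousOn_const.div (continuousOn_const.mul (S.hφ₂cont.comp hfst hmapΩ))
      (fun p hp => by have := S.hφ₂pos p.1 hp.1; positivity)
  have cγφ1 : ContinuousOn (fun p : (Fin 3 → ℝ) × ℝ => S.γ / S.φ₁ p.1)
      (S.Ω ×ˢ Icc (0:ℝ) S.T) :=
    continuousOn_const.div (S.hφ₁cont.comp hfst hmapΩ)
      (fun p hp => (S.hφ₁pos p.1 hp.1).ne')
  have cγφ2 : ContinuousOn (fun p : (Fin 3 → ℝ) × ℝ => S.γ / S.φ₂ p.1)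
      (S.Ω ×ˢ Icc (0:ℝ) S.T) :=
    continuousOn_const.div (S.hφ₂cont.comp hfst hmapΩ)
      (fun p hp => (S.hφ₂pos p.1 hp.1).ne')
  have cK1 : ∀ i j, ContinuousOn (fun p : (Fin 3 → ℝ) × ℝ => (S.K₁ p.1)⁻¹ i j)
      (S.Ω ×ˢ Icc (0:ℝ) S.T) := fun i j => (S.hK₁invcont i j).comp hfst hmapΩ
  have cK2 : ∀ i j, ContinuousOn (fun p : (Fin 3 → ℝ) × ℝ => (S.K₂ p.1)⁻¹ i j)
      (S.Ω ×ˢ Icc (0:ℝ) S.T) := fun i j => (S.hK₂invcont i j).comp hfst hmapΩ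
  -- continuity of the integrands
  have cF0 : ContinuousOn (fun p : (Fin 3 → ℝ) × ℝ => DPPF0 S p.1 p.2)
      (S.Ω ×ˢ Icc (0:ℝ) S.T) :=
    (cφ1.mul (contOn_dot S.hw₁cont S.hw₁cont)).add (cφ2.mul (contOn_dot S.hw₂cont S.hw₂cont))
  have cF1 : ContinuousOn (fun p : (Fin 3 → ℝ) × ℝ => DPPF1 S p.1 p.2)
      (S.Ω ×ˢ Icc (0:ℝ) S.T) :=
    (cφ1.mul ((contOn_dot S.hdw₁cont S.hw₁cont).add (contOn_dot S.hw₁cont S.hdw₁cont))).add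
      (cφ2.mul ((contOn_dot S.hdw₂cont S.hw₂cont).add (contOn_dot S.hw₂cont S.hdw₂cont)))
  have cQ : ContinuousOn (fun p : (Fin 3 → ℝ) × ℝ => S.q₁ p.1 p.2 - S.q₂ p.1 p.2)
      (S.Ω ×ˢ Icc (0:ℝ) S.T) := S.hq₁cont.sub S.hq₂cont
  have cdQ : ContinuousOn (fun p : (Fin 3 → ℝ) × ℝ => S.dq₁ p.1 p.2 - S.dq₂ p.1 p.2)
      (S.Ω ×ˢ Icc (0:ℝ) S.T) := S.hdq₁cont.sub S.hdq₂cont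
  have cG0 : ContinuousOn (fun p : (Fin 3 → ℝ) × ℝ => DPPG0 S p.1 p.2)
      (S.Ω ×ˢ Icc (0:ℝ) S.T) :=
    ((continuousOn_const.mul (contOn_dotMat S.hw₁cont cK1 S.hw₁cont)).add
      (continuousOn_const.mul (contOn_dotMat S.hw₂cont cK2 S.hw₂cont))).add
      (continuousOn_const.mul (cQ.mul cQ))
  have cG1 : ContinuousOn (fun p : (Fin 3 → ℝ) × ℝ => DPPG1 S p.1 p.2)
      (S.Ω ×ˢ Icc (0:ℝ) S.T) :=
    ((continuousOn_const.mul ((contOn_dotMat S.hdw₁cont cK1 S.hw₁cont).add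
        (contOn_dotMat S.hw₁cont cK1 S.hdw₁cont))).add
      (continuousOn_const.mul ((contOn_dotMat S.hdw₂cont cK2 S.hw₂cont).add
        (contOn_dotMat S.hw₂cont cK2 S.hdw₂cont)))).add
      (continuousOn_const.mul ((cdQ.mul cQ).add (cQ.mul cdQ)))
  -- boundedness of the integrands
  have bF0 : ∃ C : ℝ, ∀ x ∈ S.Ω, ∀ s ∈ Icc (0:ℝ) S.T, |DPPF0 S x s| ≤ C := by
    refine ⟨S.γ / (2 * c1) * (3 * (Cw1 * Cw1)) + S.γ / (2 * c2) * (3 * (Cw2 * Cw2)),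
      fun x hx s hs => abs_add_le'
        (abs_mul_le' (bφ1 x hx) (abs_dot_le' (hCw1 x hx s hs) (hCw1 x hx s hs)))
        (abs_mul_le' (bφ2 x hx) (abs_dot_le' (hCw2 x hx s hs) (hCw2 x hx s hs)))⟩
  have bF1 : ∃ C : ℝ, ∀ x ∈ S.Ω, ∀ s ∈ Icc (0:ℝ) S.T, |DPPF1 S x s| ≤ C := by
    refine ⟨S.γ / (2 * c1) * (3 * (Cd1 * Cw1) + 3 * (Cw1 * Cd1))
        + S.γ / (2 * c2) * (3 * (Cd2 * Cw2) + 3 * (Cw2 * Cd2)),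
      fun x hx s hs => abs_add_le'
        (abs_mul_le' (bφ1 x hx) (abs_add_le'
          (abs_dot_le' (hCd1 x hx s hs) (hCw1 x hx s hs))
          (abs_dot_le' (hCw1 x hx s hs) (hCd1 x hx s hs))))
        (abs_mul_le' (bφ2 x hx) (abs_add_le'
          (abs_dot_le' (hCd2 x hx s hs) (hCw2 x hx s hs))
          (abs_dot_le' (hCw2 x hx s hs) (hCd2 x hx s hs))))⟩
  have bG0 : ∃ C : ℝ, ∀ x ∈ S.Ω, ∀ s ∈ Icc (0:ℝ) S.T, |DPPG0 S x s| ≤ C := by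
    refine ⟨(S.μ * (9 * (CK1 * (Cw1 * Cw1))) + S.μ * (9 * (CK2 * (Cw2 * Cw2))))
        + S.β / S.μ * ((Cq1 + Cq2) * (Cq1 + Cq2)),
      fun x hx s hs => abs_add_le' (abs_add_le'
        (abs_mul_le' bμ (abs_dotMat_le (hCK1 x hx) (hCw1 x hx s hs) (hCw1 x hx s hs)))
        (abs_mul_le' bμ (abs_dotMat_le (hCK2 x hx) (hCw2 x hx s hs) (hCw2 x hx s hs))))
        (abs_mul_le' bβμ (abs_mul_le'
          (abs_sub_le'' (hCq1 x hx s hs) (hCq2 x hx s hs))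
          (abs_sub_le'' (hCq1 x hx s hs) (hCq2 x hx s hs))))⟩
  have bG1 : ∃ C : ℝ, ∀ x ∈ S.Ω, ∀ s ∈ Icc (0:ℝ) S.T, |DPPG1 S x s| ≤ C := by
    refine ⟨(S.μ * (9 * (CK1 * (Cd1 * Cw1)) + 9 * (CK1 * (Cw1 * Cd1)))
        + S.μ * (9 * (CK2 * (Cd2 * Cw2)) + 9 * (CK2 * (Cw2 * Cd2))))
        + S.β / S.μ * ((Ce1 + Ce2) * (Cq1 + Cq2) + (Cq1 + Cq2) * (Ce1 + Ce2)),
      fun x hx s hs => abs_add_le' (abs_add_le'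
        (abs_mul_le' bμ (abs_add_le'
          (abs_dotMat_le (hCK1 x hx) (hCd1 x hx s hs) (hCw1 x hx s hs))
          (abs_dotMat_le (hCK1 x hx) (hCw1 x hx s hs) (hCd1 x hx s hs))))
        (abs_mul_le' bμ (abs_add_le'
          (abs_dotMat_le (hCK2 x hx) (hCd2 x hx s hs) (hCw2 x hx s hs))
          (abs_dotMat_le (hCK2 x hx) (hCw2 x hx s hs) (hCd2 x hx s hs)))))
        (abs_mul_le' bβμ (abs_add_le'
          (abs_mul_le' (abs_sub_le'' (hCe1 x hx s hs) (hCe2 x hx s hs))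
            (abs_sub_le'' (hCq1 x hx s hs) (hCq2 x hx s hs)))
          (abs_mul_le' (abs_sub_le'' (hCq1 x hx s hs) (hCq2 x hx s hs))
            (abs_sub_le'' (hCe1 x hx s hs) (hCe2 x hx s hs)))))⟩
  -- Step 1: E′(s) = ∫ F1 on [0,T]
  have hE1 : ∀ s ∈ Icc (0:ℝ) S.T,
      HasDerivWithinAt S.E (∫ x in S.Ω, DPPF1 S x s) (Icc (0:ℝ) S.T) s := by
    intro s hs
    exact S.leibniz (fun x r => DPPF0 S x r) (fun x r => DPPF1 S x r)
      (fun x hx r hr => DPPF_deriv S hx hr) cF0 cF1 bF0 bF1 s hs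
  have hdE : ∀ s ∈ Icc (0:ℝ) S.T,
      derivWithin S.E (Icc (0:ℝ) S.T) s = ∫ x in S.Ω, DPPF1 S x s :=
    fun s hs => (hE1 s hs).derivWithin (hUD s hs)
  -- Step 2: ∫ F1 = ∫ G0 on [0,T]
  have key1 : ∀ s ∈ Icc (0:ℝ) S.T,
      (∫ x in S.Ω, DPPF1 S x s) = ∫ x in S.Ω, DPPG0 S x s := by
    intro s hs
    have hintG0 : IntegrableOn (fun x => DPPG0 S x s) S.Ω := by
      obtain ⟨C, hC⟩ := bG0
      exact integrableOn_of_bdd S.hΩopen S.hΩbdd (contOn_fix cG0 hs)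
        (fun x hx => hC x hx s hs)
    have hint1a : IntegrableOn
        (fun x => S.w₁ x s ⬝ᵥ S.gq₁ x s + S.q₁ x s * divOf (S.Jw₁ x s)) S.Ω := by
      refine integrableOn_of_bdd S.hΩopen S.hΩbdd
        (contOn_fix (f := fun x s => S.w₁ x s ⬝ᵥ S.gq₁ x s + S.q₁ x s * divOf (S.Jw₁ x s))
          ((contOn_dot S.hw₁cont S.hgq₁cont).add (S.hq₁cont.mul S.hdivw₁cont)) hs)
        (C := 3 * (Cw1 * Cg1) + Cq1 * Cv1) (fun x hx => abs_add_le'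
          (abs_dot_le' (hCw1 x hx s hs) (hCg1 x hx s hs))
          (abs_mul_le' (hCq1 x hx s hs) (hCv1 x hx s hs)))
    have hint1b : IntegrableOn
        (fun x => S.w₂ x s ⬝ᵥ S.gq₂ x s + S.q₂ x s * divOf (S.Jw₂ x s)) S.Ω := by
      refine integrableOn_of_bdd S.hΩopen S.hΩbdd
        (contOn_fix (f := fun x s => S.w₂ x s ⬝ᵥ S.gq₂ x s + S.q₂ x s * divOf (S.Jw₂ x s))
          ((contOn_dot S.hw₂cont S.hgq₂cont).add (S.hq₂cont.mul S.hdivw₂cont)) hs)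
        (C := 3 * (Cw2 * Cg2) + Cq2 * Cv2) (fun x hx => abs_add_le'
          (abs_dot_le' (hCw2 x hx s hs) (hCg2 x hx s hs))
          (abs_mul_le' (hCq2 x hx s hs) (hCv2 x hx s hs)))
    have heq : ∀ x ∈ S.Ω, DPPF1 S x s = DPPG0 S x s
        - (S.w₁ x s ⬝ᵥ S.gq₁ x s + S.q₁ x s * divOf (S.Jw₁ x s))
        - (S.w₂ x s ⬝ᵥ S.gq₂ x s + S.q₂ x s * divOf (S.Jw₂ x s)) := by
      intro x hx
      have s1 : S.γ / S.φ₁ x * (S.w₁ x s ⬝ᵥ S.dw₁ x s)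
          + S.μ * (S.w₁ x s ⬝ᵥ ((S.K₁ x)⁻¹ *ᵥ S.w₁ x s)) + S.w₁ x s ⬝ᵥ S.gq₁ x s = 0 := by
        have h := congrArg (fun v => S.w₁ x s ⬝ᵥ v) (S.pde₁ x hx s hs)
        simpa [dotProduct_add, dotProduct_smul, smul_eq_mul] using h
      have s2 : S.γ / S.φ₂ x * (S.w₂ x s ⬝ᵥ S.dw₂ x s)
          + S.μ * (S.w₂ x s ⬝ᵥ ((S.K₂ x)⁻¹ *ᵥ S.w₂ x s)) + S.w₂ x s ⬝ᵥ S.gq₂ x s = 0 := by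
        have h := congrArg (fun v => S.w₂ x s ⬝ᵥ v) (S.pde₂ x hx s hs)
        simpa [dotProduct_add, dotProduct_smul, smul_eq_mul] using h
      simp only [DPPF1, DPPG0]
      rw [S.mass₁ x hx s hs, S.mass₂ x hx s hs,
        dotProduct_comm (S.dw₁ x s), dotProduct_comm (S.dw₂ x s)]
      linear_combination s1 + s2
    calc (∫ x in S.Ω, DPPF1 S x s)
        = ∫ x in S.Ω, (DPPG0 S x s
            - (S.w₁ x s ⬝ᵥ S.gq₁ x s + S.q₁ x s * divOf (S.Jw₁ x s))
            - (S.w₂ x s ⬝ᵥ S.gq₂ x s + S.q₂ x s * divOf (S.Jw₂ x s))) :=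
          setIntegral_congr_fun hmeas heq
      _ = (∫ x in S.Ω, DPPG0 S x s)
            - (∫ x in S.Ω, (S.w₁ x s ⬝ᵥ S.gq₁ x s + S.q₁ x s * divOf (S.Jw₁ x s)))
            - (∫ x in S.Ω, (S.w₂ x s ⬝ᵥ S.gq₂ x s + S.q₂ x s * divOf (S.Jw₂ x s))) := by
          have hsub1 : IntegrableOn (fun x => DPPG0 S x s
              - (S.w₁ x s ⬝ᵥ S.gq₁ x s + S.q₁ x s * divOf (S.Jw₁ x s))) S.Ω :=
            hintG0.sub hint1a
          rw [integral_sub hsub1 hint1b, integral_sub hintG0 hint1a]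
      _ = ∫ x in S.Ω, DPPG0 S x s := by
          rw [S.H1₁ s hs, S.H1₂ s hs]; ring
  -- Step 3: second derivative
  have congr1 : derivWithin (fun s => derivWithin S.E (Icc (0:ℝ) S.T) s) (Icc (0:ℝ) S.T) t
      = derivWithin (fun s => ∫ x in S.Ω, DPPG0 S x s) (Icc (0:ℝ) S.T) t :=
    derivWithin_congr (fun s hs => (hdE s hs).trans (key1 s hs)) ((hdE t ht).trans (key1 t ht))
  have hE2 : HasDerivWithinAt (fun s => ∫ x in S.Ω, DPPG0 S x s)
      (∫ x in S.Ω, DPPG1 S x t) (Icc (0:ℝ) S.T) t :=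
    S.leibniz (fun x r => DPPG0 S x r) (fun x r => DPPG1 S x r)
      (fun x hx r hr => DPPG_deriv S hx hr) cG0 cG1 bG0 bG1 t ht
  rw [congr1, hE2.derivWithin (hUD t ht)]
  -- Step 4: evaluate ∫ G1 at time t
  have hdiv1 : ∀ x ∈ S.Ω,
      divOf (S.Jdw₁ x t) = -(S.β / S.μ) * (S.dq₁ x t - S.dq₂ x t) := by
    intro x hx
    have h2 : HasDerivWithinAt (fun s => divOf (S.Jw₁ x s))
        (-(S.β / S.μ) * (S.dq₁ x t - S.dq₂ x t)) (Icc (0:ℝ) S.T) t := by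
      have hg : HasDerivWithinAt (fun s => -(S.β / S.μ) * (S.q₁ x s - S.q₂ x s))
          (-(S.β / S.μ) * (S.dq₁ x t - S.dq₂ x t)) (Icc (0:ℝ) S.T) t :=
        ((S.hdq₁ x hx t ht).sub (S.hdq₂ x hx t ht)).const_mul _
      exact hg.congr (fun s hs => (S.mass₁ x hx s hs)) (S.mass₁ x hx t ht)
    have h1 := S.hdivcomm₁ x hx t ht
    have e1 := h1.derivWithin (hUD t ht)
    have e2 := h2.derivWithin (hUD t ht)
    rw [← e1, ← e2]
  have hdiv2 : ∀ x ∈ S.Ω,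
      divOf (S.Jdw₂ x t) = (S.β / S.μ) * (S.dq₁ x t - S.dq₂ x t) := by
    intro x hx
    have h2 : HasDerivWithinAt (fun s => divOf (S.Jw₂ x s))
        ((S.β / S.μ) * (S.dq₁ x t - S.dq₂ x t)) (Icc (0:ℝ) S.T) t := by
      have hg : HasDerivWithinAt (fun s => (S.β / S.μ) * (S.q₁ x s - S.q₂ x s))
          ((S.β / S.μ) * (S.dq₁ x t - S.dq₂ x t)) (Icc (0:ℝ) S.T) t :=
        ((S.hdq₁ x hx t ht).sub (S.hdq₂ x hx t ht)).const_mul _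
      exact hg.congr (fun s hs => (S.mass₂ x hx s hs)) (S.mass₂ x hx t ht)
    have h1 := S.hdivcomm₂ x hx t ht
    have e1 := h1.derivWithin (hUD t ht)
    have e2 := h2.derivWithin (hUD t ht)
    rw [← e1, ← e2]
  have hint_t1 : IntegrableOn (fun x => S.γ / S.φ₁ x * (S.dw₁ x t ⬝ᵥ S.dw₁ x t)) S.Ω := by
    refine integrableOn_of_bdd S.hΩopen S.hΩbdd
      (contOn_fix (f := fun x t => S.γ / S.φ₁ x * (S.dw₁ x t ⬝ᵥ S.dw₁ x t))
        (cγφ1.mul (contOn_dot S.hdw₁cont S.hdw₁cont)) ht)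
      (C := S.γ / c1 * (3 * (Cd1 * Cd1))) (fun x hx =>
        abs_mul_le' (bγφ1 x hx) (abs_dot_le' (hCd1 x hx t ht) (hCd1 x hx t ht)))
  have hint_t2 : IntegrableOn (fun x => S.γ / S.φ₂ x * (S.dw₂ x t ⬝ᵥ S.dw₂ x t)) S.Ω := by
    refine integrableOn_of_bdd S.hΩopen S.hΩbdd
      (contOn_fix (f := fun x t => S.γ / S.φ₂ x * (S.dw₂ x t ⬝ᵥ S.dw₂ x t))
        (cγφ2.mul (contOn_dot S.hdw₂cont S.hdw₂cont)) ht)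
      (C := S.γ / c2 * (3 * (Cd2 * Cd2))) (fun x hx =>
        abs_mul_le' (bγφ2 x hx) (abs_dot_le' (hCd2 x hx t ht) (hCd2 x hx t ht)))
  have hint_h2a : IntegrableOn
      (fun x => S.dw₁ x t ⬝ᵥ S.gq₁ x t + S.q₁ x t * divOf (S.Jdw₁ x t)) S.Ω := by
    refine integrableOn_of_bdd S.hΩopen S.hΩbdd
      (contOn_fix (f := fun x t => S.dw₁ x t ⬝ᵥ S.gq₁ x t + S.q₁ x t * divOf (S.Jdw₁ x t))
        ((contOn_dot S.hdw₁cont S.hgq₁cont).add (S.hq₁cont.mul S.hdivdw₁cont)) ht)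
      (C := 3 * (Cd1 * Cg1) + Cq1 * Cu1) (fun x hx => abs_add_le'
        (abs_dot_le' (hCd1 x hx t ht) (hCg1 x hx t ht))
        (abs_mul_le' (hCq1 x hx t ht) (hCu1 x hx t ht)))
  have hint_h2b : IntegrableOn
      (fun x => S.dw₂ x t ⬝ᵥ S.gq₂ x t + S.q₂ x t * divOf (S.Jdw₂ x t)) S.Ω := by
    refine integrableOn_of_bdd S.hΩopen S.hΩbdd
      (contOn_fix (f := fun x t => S.dw₂ x t ⬝ᵥ S.gq₂ x t + S.q₂ x t * divOf (S.Jdw₂ x t))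
        ((contOn_dot S.hdw₂cont S.hgq₂cont).add (S.hq₂cont.mul S.hdivdw₂cont)) ht)
      (C := 3 * (Cd2 * Cg2) + Cq2 * Cu2) (fun x hx => abs_add_le'
        (abs_dot_le' (hCd2 x hx t ht) (hCg2 x hx t ht))
        (abs_mul_le' (hCq2 x hx t ht) (hCu2 x hx t ht)))
  have heq2 : ∀ x ∈ S.Ω, DPPG1 S x t =
      (2 * (S.γ / S.φ₁ x * (S.dw₁ x t ⬝ᵥ S.dw₁ x t))
        + 2 * (S.γ / S.φ₂ x * (S.dw₂ x t ⬝ᵥ S.dw₂ x t)))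
      + (2 * (S.dw₁ x t ⬝ᵥ S.gq₁ x t + S.q₁ x t * divOf (S.Jdw₁ x t))
        + 2 * (S.dw₂ x t ⬝ᵥ S.gq₂ x t + S.q₂ x t * divOf (S.Jdw₂ x t))) := by
    intro x hx
    have hs1 : ((S.K₁ x)⁻¹)ᵀ = (S.K₁ x)⁻¹ := by
      rw [Matrix.transpose_nonsing_inv, Matrix.IsSymm.eq (S.hK₁symm x hx)]
    have hs2 : ((S.K₂ x)⁻¹)ᵀ = (S.K₂ x)⁻¹ := by
      rw [Matrix.transpose_nonsing_inv, Matrix.IsSymm.eq (S.hK₂symm x hx)]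
    have s1 : S.γ / S.φ₁ x * (S.dw₁ x t ⬝ᵥ S.dw₁ x t)
        + S.μ * (S.dw₁ x t ⬝ᵥ ((S.K₁ x)⁻¹ *ᵥ S.w₁ x t)) + S.dw₁ x t ⬝ᵥ S.gq₁ x t = 0 := by
      have h := congrArg (fun v => S.dw₁ x t ⬝ᵥ v) (S.pde₁ x hx t ht)
      simpa [dotProduct_add, dotProduct_smul, smul_eq_mul] using h
    have s2 : S.γ / S.φ₂ x * (S.dw₂ x t ⬝ᵥ S.dw₂ x t)
        + S.μ * (S.dw₂ x t ⬝ᵥ ((S.K₂ x)⁻¹ *ᵥ S.w₂ x t)) + S.dw₂ x t ⬝ᵥ S.gq₂ x t = 0 := by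
      have h := congrArg (fun v => S.dw₂ x t ⬝ᵥ v) (S.pde₂ x hx t ht)
      simpa [dotProduct_add, dotProduct_smul, smul_eq_mul] using h
    simp only [DPPG1]
    rw [symm_dot hs1 (S.w₁ x t) (S.dw₁ x t), symm_dot hs2 (S.w₂ x t) (S.dw₂ x t),
      hdiv1 x hx, hdiv2 x hx]
    linear_combination (-2 : ℝ) * s1 + (-2 : ℝ) * s2
  calc (∫ x in S.Ω, DPPG1 S x t)
      = ∫ x in S.Ω, ((2 * (S.γ / S.φ₁ x * (S.dw₁ x t ⬝ᵥ S.dw₁ x t))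
          + 2 * (S.γ / S.φ₂ x * (S.dw₂ x t ⬝ᵥ S.dw₂ x t)))
        + (2 * (S.dw₁ x t ⬝ᵥ S.gq₁ x t + S.q₁ x t * divOf (S.Jdw₁ x t))
          + 2 * (S.dw₂ x t ⬝ᵥ S.gq₂ x t + S.q₂ x t * divOf (S.Jdw₂ x t)))) :=
        setIntegral_congr_fun hmeas heq2
    _ = ((2 * (∫ x in S.Ω, S.γ / S.φ₁ x * (S.dw₁ x t ⬝ᵥ S.dw₁ x t))
          + 2 * (∫ x in S.Ω, S.γ / S.φ₂ x * (S.dw₂ x t ⬝ᵥ S.dw₂ x t)))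
        + (2 * (∫ x in S.Ω, (S.dw₁ x t ⬝ᵥ S.gq₁ x t + S.q₁ x t * divOf (S.Jdw₁ x t)))
          + 2 * (∫ x in S.Ω, (S.dw₂ x t ⬝ᵥ S.gq₂ x t + S.q₂ x t * divOf (S.Jdw₂ x t))))) := by
        have ia1 : IntegrableOn (fun x => 2 * (S.γ / S.φ₁ x * (S.dw₁ x t ⬝ᵥ S.dw₁ x t))) S.Ω :=
          hint_t1.const_mul 2
        have ia2 : IntegrableOn (fun x => 2 * (S.γ / S.φ₂ x * (S.dw₂ x t ⬝ᵥ S.dw₂ x t))) S.Ω :=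
          hint_t2.const_mul 2
        have ib1 : IntegrableOn
            (fun x => 2 * (S.dw₁ x t ⬝ᵥ S.gq₁ x t + S.q₁ x t * divOf (S.Jdw₁ x t))) S.Ω :=
          hint_h2a.const_mul 2
        have ib2 : IntegrableOn
            (fun x => 2 * (S.dw₂ x t ⬝ᵥ S.gq₂ x t + S.q₂ x t * divOf (S.Jdw₂ x t))) S.Ω :=
          hint_h2b.const_mul 2
        have ia : IntegrableOn (fun x => 2 * (S.γ / S.φ₁ x * (S.dw₁ x t ⬝ᵥ S.dw₁ x t))
            + 2 * (S.γ / S.φ₂ x * (S.dw₂ x t ⬝ᵥ S.dw₂ x t))) S.Ω := ia1.add ia2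
        have ib : IntegrableOn (fun x => 2 * (S.dw₁ x t ⬝ᵥ S.gq₁ x t + S.q₁ x t * divOf (S.Jdw₁ x t))
            + 2 * (S.dw₂ x t ⬝ᵥ S.gq₂ x t + S.q₂ x t * divOf (S.Jdw₂ x t))) S.Ω := ib1.add ib2
        rw [integral_add ia ib, integral_add ia1 ia2, integral_add ib1 ib2,
          MeasureTheory.integral_const_mul, MeasureTheory.integral_const_mul, MeasureTheory.integral_const_mul, MeasureTheory.integral_const_mul]
    _ = 2 * (∫ x in S.Ω, (S.γ / S.φ₁ x) * (S.dw₁ x t ⬝ᵥ S.dw₁ x t))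
          + 2 * (∫ x in S.Ω, (S.γ / S.φ₂ x) * (S.dw₂ x t ⬝ᵥ S.dw₂ x t)) := by
        rw [S.H2₁ t ht, S.H2₂ t ht]; ring
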